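/- Let ∇ be a Type B connection on M = (0,∞)×ℝ, with Christoffel symbols Γ_{ij}^k = C_{ij}^k / x¹ for real constants C_{ij}^k = C_{ji}^k. Then the components of its Ricci tensor are: ρ₁₁ = (x¹)⁻²{C₁₂²(C₁₁¹ − C₁₂² + 1) + C₁₁²(C₂₂² − C₁₂¹)}, ρ₁₂ = (x¹)⁻²{−C₁₁²C₂₂¹ + C₁₂¹C₁₂² + C₂₂²}, ρ₂₁ = (x¹)⁻²{−C₁₁²C₂₂¹ + C₁₂¹C₁₂² − C₁₂¹}, and ρ₂₂ = (x¹)⁻²{C₁₁¹C₂₂¹ − (C₁₂¹)² + C₁₂¹C₂₂² − C₁₂²C₂₂¹ − C₂₂¹}. -/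

import Mathlib

noncomputable section

/-- The coordinate directions of ℝ². -/
def ee : Fin 2 → ℝ × ℝ := ![(1, 0), (0, 1)]

/-- Partial derivative `∂_i f`. -/
def pd (i : Fin 2) (f : ℝ × ℝ → ℝ) : ℝ × ℝ → ℝ :=
  fun p => fderiv ℝ f p (ee i)

/-- Christoffel symbols `Γ_{ij}^k = C_{ij}^k / x¹` of a Type B connection on `(0,∞)×ℝ`. -/
def GammaB (C : Fin 2 → Fin 2 → Fin 2 → ℝ) (i j k : Fin 2) : ℝ × ℝ → ℝ :=
  fun p => C i j k / p.1

/-- Ricci tensor of a Type B connection: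
`ρ_{jk} = Σ_i (∂_i Γ_{jk}^i − ∂_j Γ_{ik}^i) + Σ_{i,p} (Γ_{ip}^i Γ_{jk}^p − Γ_{jp}^i Γ_{ik}^p)`. -/
def ricciB (C : Fin 2 → Fin 2 → Fin 2 → ℝ) (j k : Fin 2) : ℝ × ℝ → ℝ :=
  fun p => (∑ i, (pd i (GammaB C j k i) p - pd j (GammaB C i k i) p))
    + ∑ i, ∑ q, (GammaB C i q i p * GammaB C j k q p - GammaB C j q i p * GammaB C i k q p)

lemma hasfd (c : ℝ) (p : ℝ × ℝ) (hp : p.1 ≠ 0) :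
    HasFDerivAt (fun q : ℝ × ℝ => c / q.1)
      (c • ((ContinuousLinearMap.smulRight (1 : ℝ →L[ℝ] ℝ) (-(p.1 ^ 2)⁻¹)).comp
        (ContinuousLinearMap.fst ℝ ℝ ℝ))) p := by
  simpa [div_eq_mul_inv, ContinuousLinearMap.smulRight_one_eq_toSpanSingleton] using
    (((hasFDerivAt_inv hp).comp p (hasFDerivAt_fst (p := p))).const_mul c)

lemma pd0 (c : ℝ) (p : ℝ × ℝ) (hp : p.1 ≠ 0) :
    pd 0 (fun q : ℝ × ℝ => c / q.1) p = -c / p.1 ^ 2 := by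
  rw [pd, (hasfd c p hp).fderiv]
  simp [ee]
  ring

lemma pd1 (c : ℝ) (p : ℝ × ℝ) (hp : p.1 ≠ 0) :
    pd 1 (fun q : ℝ × ℝ => c / q.1) p = 0 := by
  rw [pd, (hasfd c p hp).fderiv]
  simp [ee]

lemma pdG0 (C : Fin 2 → Fin 2 → Fin 2 → ℝ) (j k i : Fin 2) (p : ℝ × ℝ) (hp : p.1 ≠ 0) :
    pd 0 (GammaB C j k i) p = -(C j k i) / p.1 ^ 2 := pd0 _ p hp

lemma pdG1 (C : Fin 2 → Fin 2 → Fin 2 → ℝ) (j k i : Fin 2) (p : ℝ × ℝ) (hp : p.1 ≠ 0) :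
    pd 1 (GammaB C j k i) p = 0 := pd1 _ p hp

/-- explicit components of the Ricci tensor of a Type B connection. -/
theorem stmt3 (C : Fin 2 → Fin 2 → Fin 2 → ℝ)
    (hC : ∀ i j k, C i j k = C j i k) :
    ∀ p : ℝ × ℝ, 0 < p.1 →
      ricciB C 0 0 p =
          (p.1 ^ 2)⁻¹ * (C 0 1 1 * (C 0 0 0 - C 0 1 1 + 1) + C 0 0 1 * (C 1 1 1 - C 0 1 0)) ∧
      ricciB C 0 1 p =
          (p.1 ^ 2)⁻¹ * (-(C 0 0 1 * C 1 1 0) + C 0 1 0 * C 0 1 1 + C 1 1 1) ∧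
      ricciB C 1 0 p =
          (p.1 ^ 2)⁻¹ * (-(C 0 0 1 * C 1 1 0) + C 0 1 0 * C 0 1 1 - C 0 1 0) ∧
      ricciB C 1 1 p =
          (p.1 ^ 2)⁻¹ * (C 0 0 0 * C 1 1 0 - C 0 1 0 ^ 2 + C 0 1 0 * C 1 1 1
            - C 0 1 1 * C 1 1 0 - C 1 1 0) := by
  intro p hp
  have hp' : p.1 ≠ 0 := ne_of_gt hp
  have h10 : ∀ k, C 1 0 k = C 0 1 k := fun k => hC 1 0 k
  refine ⟨?_, ?_, ?_, ?_⟩ <;>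
  · simp only [ricciB, Fin.sum_univ_two, GammaB, pdG0 C _ _ _ p hp', pdG1 C _ _ _ p hp']
    field_simp
    simp only [h10]
    ring
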